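/- Let (P, Q) and (P', Q') be two pairs of probability measures, each pair admitting densities (p, q) and (p', q') with respect to common σ-finite measures, with q > 0 and q' > 0 almost everywhere. Then: (i) for (P ⊗ P')-almost every (t, s), the privacy loss function of the product pair satisfies L_{(P×P')/(Q×Q')}(t, s) = L_{P/Q}(t) + L_{P'/Q'}(s); and (ii) the pushforward of the product measure P ⊗ P' under the map (t, s) ↦ L_{P/Q}(t) + L_{P'/Q'}(s) equals the convolution of the pushforward of P under L_{P/Q} with the pushforward of P' under L_{P'/Q'}. In other words, the privacy loss random variable of the product pair (P × P', Q × Q') is the independent sum of the privacy loss random variables of (P, Q) and (P', Q'). -/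

import Mathlib

open MeasureTheory ProbabilityTheory Real

/-- (i) The privacy loss function of a product pair decomposes as the sum of the
privacy loss functions, almost everywhere w.r.t. the product measure; and
(ii) the privacy loss random variable of the product pair is the convolution
(independent sum) of the two privacy loss random variables. -/
theorem plrv_of_product_pair {Ω Ω' : Type*} [MeasurableSpace Ω] [MeasurableSpace Ω']
    (ν : Measure Ω) (ν' : Measure Ω') [SigmaFinite ν] [SigmaFinite ν']
    (p q : Ω → ℝ) (p' q' : Ω' → ℝ)
    (hp : Measurable p) (hq : Measurable q) (hp' : Measurable p') (hq' : Measurable q')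
    (hp0 : ∀ t, 0 ≤ p t) (hq0 : ∀ t, 0 ≤ q t) (hp'0 : ∀ t, 0 ≤ p' t) (hq'0 : ∀ t, 0 ≤ q' t)
    (hqpos : ∀ᵐ t ∂ν, 0 < q t) (hq'pos : ∀ᵐ t ∂ν', 0 < q' t)
    (P Q : Measure Ω) (P' Q' : Measure Ω')
    (hP : P = ν.withDensity (fun t => ENNReal.ofReal (p t)))
    (hQ : Q = ν.withDensity (fun t => ENNReal.ofReal (q t)))
    (hP' : P' = ν'.withDensity (fun t => ENNReal.ofReal (p' t)))
    (hQ' : Q' = ν'.withDensity (fun t => ENNReal.ofReal (q' t)))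
    [IsProbabilityMeasure P] [IsProbabilityMeasure Q]
    [IsProbabilityMeasure P'] [IsProbabilityMeasure Q'] :
    (∀ᵐ x ∂(P.prod P'),
        log ((p x.1 * p' x.2) / (q x.1 * q' x.2))
          = log (p x.1 / q x.1) + log (p' x.2 / q' x.2)) ∧
    (P.prod P').map (fun x => log (p x.1 / q x.1) + log (p' x.2 / q' x.2))
      = Measure.conv (P.map (fun t => log (p t / q t)))
          (P'.map (fun t => log (p' t / q' t))) := by
    -- measurability of the loss functions
  have hf : Measurable fun t => log (p t / q t) := Real.measurable_log.comp (hp.div hq)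
  have hg : Measurable fun t => log (p' t / q' t) := Real.measurable_log.comp (hp'.div hq')
  -- positivity of p, q a.e. P
  have hPp : ∀ᵐ t ∂P, 0 < p t := by
    have hs : MeasurableSet {a | ¬ 0 < p a} := (measurableSet_lt measurable_const hp).compl
    rw [hP, MeasureTheory.ae_iff, MeasureTheory.withDensity_apply _ hs]
    have h0 : ∀ᵐ t ∂ν, t ∈ {a | ¬ 0 < p a} →
        ENNReal.ofReal (p t) = (fun _ => (0 : ENNReal)) t := by
      filter_upwards with t ht
      simp only [Set.mem_setOf_eq, not_lt] at ht
      simp [le_antisymm ht (hp0 t)]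
    rw [setLIntegral_congr_fun_ae hs h0, lintegral_zero]
  have hPq : ∀ᵐ t ∂P, 0 < q t := by
    rw [hP]; exact (withDensity_absolutelyContinuous ν _) hqpos
  have hPp' : ∀ᵐ t ∂P', 0 < p' t := by
    have hs : MeasurableSet {a | ¬ 0 < p' a} := (measurableSet_lt measurable_const hp').compl
    rw [hP', MeasureTheory.ae_iff, MeasureTheory.withDensity_apply _ hs]
    have h0 : ∀ᵐ t ∂ν', t ∈ {a | ¬ 0 < p' a} →
        ENNReal.ofReal (p' t) = (fun _ => (0 : ENNReal)) t := by
      filter_upwards with t ht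
      simp only [Set.mem_setOf_eq, not_lt] at ht
      simp [le_antisymm ht (hp'0 t)]
    rw [setLIntegral_congr_fun_ae hs h0, lintegral_zero]
  have hPq' : ∀ᵐ t ∂P', 0 < q' t := by
    rw [hP']; exact (withDensity_absolutelyContinuous ν' _) hq'pos
  -- transfer to the product measure
  have hmapfst : (P.prod P').map Prod.fst = P := by
    simp [Measure.map_fst_prod]
  have hmapsnd : (P.prod P').map Prod.snd = P' := by
    simp [Measure.map_snd_prod]
  have h1 : ∀ᵐ x ∂(P.prod P'), 0 < p x.1 ∧ 0 < q x.1 := by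
    have := ae_of_ae_map (measurable_fst.aemeasurable (μ := P.prod P'))
      (hmapfst ▸ hPp.and hPq)
    exact this
  have h2 : ∀ᵐ x ∂(P.prod P'), 0 < p' x.2 ∧ 0 < q' x.2 := by
    have := ae_of_ae_map (measurable_snd.aemeasurable (μ := P.prod P'))
      (hmapsnd ▸ hPp'.and hPq')
    exact this
  constructor
  · filter_upwards [h1, h2] with x ⟨hx1, hx2⟩ ⟨hx3, hx4⟩
    rw [show (p x.1 * p' x.2) / (q x.1 * q' x.2) = (p x.1 / q x.1) * (p' x.2 / q' x.2) from
      (div_mul_div_comm _ _ _ _).symm]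
    exact Real.log_mul (div_pos hx1 hx2).ne' (div_pos hx3 hx4).ne'
  · have : Measure.conv (P.map fun t => log (p t / q t)) (P'.map fun t => log (p' t / q' t))
        = ((P.map fun t => log (p t / q t)).prod (P'.map fun t => log (p' t / q' t))).map
            (fun x : ℝ × ℝ => x.1 + x.2) := rfl
    rw [this, Measure.map_prod_map _ _ hf hg,
      Measure.map_map measurable_add (hf.prodMap hg)]
    rfl
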